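/- Let d ≥ 2 and g ∈ GL(d,ℝ). Assume there exist a nonzero vector v ∈ ℝ^d, a scalar c ∈ ℝ with g·v = c·v, a g-invariant linear subspace W with ℝ^d = ℝv ⊕ W, and constants 0 ≤ ρ < |c| and C₀ > 0 such that ‖gⁿ·x‖ ≤ C₀·ρⁿ·‖x‖ for all x ∈ W and all n ∈ ℕ (i.e. g is proximal in P(ℝ^d) with attracting fixed line ℝv). For each integer n ≥ 1 fix a singular value decomposition gⁿ = k(n)·diag(α(n))·k'(n). Then sin∠( k(n)·e₁ , v ) → 0 as n → ∞. -/

import Mathlib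

open Matrix

/-- The action of a `d × d` real matrix on Euclidean `ℝ^d`. -/
noncomputable def appE {d : ℕ} (M : Matrix (Fin d) (Fin d) ℝ)
    (v : EuclideanSpace ℝ (Fin d)) : EuclideanSpace ℝ (Fin d) :=
  Matrix.toEuclideanLin M v

/-- `IsSVD g k α k'` means `g = k · diag(α) · k'` is a singular value decomposition:
`k, k'` are orthogonal and `α` is positive and nonincreasing. -/
def IsSVD {d : ℕ} (g k : Matrix (Fin d) (Fin d) ℝ) (α : Fin d → ℝ)
    (k' : Matrix (Fin d) (Fin d) ℝ) : Prop :=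
  k * kᵀ = 1 ∧ k' * k'ᵀ = 1 ∧ (∀ i, 0 < α i) ∧ Antitone α ∧
    g = k * Matrix.diagonal α * k'

/-- The sine of the angle between two vectors of Euclidean `ℝ^d`. -/
noncomputable def sinAngle {d : ℕ} (u v : EuclideanSpace ℝ (Fin d)) : ℝ :=
  Real.sin (InnerProductGeometry.angle u v)

/-- The first standard basis vector of Euclidean `ℝ^d`. -/
noncomputable def e1 {d : ℕ} (h : 0 < d) : EuclideanSpace ℝ (Fin d) :=
  EuclideanSpace.single ⟨0, h⟩ 1

section Aux

variable {d : ℕ}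

lemma appE_mul (A B : Matrix (Fin d) (Fin d) ℝ) (x : EuclideanSpace ℝ (Fin d)) :
    appE (A * B) x = appE A (appE B x) := by
  simp [appE, Matrix.toEuclideanLin_apply, Matrix.mulVec_mulVec]

lemma appE_one (x : EuclideanSpace ℝ (Fin d)) : appE (1 : Matrix (Fin d) (Fin d) ℝ) x = x := by
  simp [appE, Matrix.toEuclideanLin_apply, Matrix.one_mulVec]

lemma appE_smul (A : Matrix (Fin d) (Fin d) ℝ) (t : ℝ) (x : EuclideanSpace ℝ (Fin d)) :
    appE A (t • x) = t • appE A x := by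
  simp [appE]

lemma appE_add (A : Matrix (Fin d) (Fin d) ℝ) (x y : EuclideanSpace ℝ (Fin d)) :
    appE A (x + y) = appE A x + appE A y := by
  simp [appE]

lemma inner_appE (A : Matrix (Fin d) (Fin d) ℝ) (x y : EuclideanSpace ℝ (Fin d)) :
    inner ℝ (appE A x) y = (inner ℝ x (appE Aᵀ y) : ℝ) := by
  have h : (Aᵀ : Matrix (Fin d) (Fin d) ℝ) = Aᴴ := by
    ext i j; simp [Matrix.conjTranspose_apply]
  rw [show appE Aᵀ y = Matrix.toEuclideanLin Aᴴ y by rw [← h]; rfl,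
    Matrix.toEuclideanLin_conjTranspose_eq_adjoint, LinearMap.adjoint_inner_right]
  rfl

lemma norm_appE_orth {A : Matrix (Fin d) (Fin d) ℝ} (hA : A * Aᵀ = 1)
    (x : EuclideanSpace ℝ (Fin d)) : ‖appE A x‖ = ‖x‖ := by
  have h' : Aᵀ * A = 1 := mul_eq_one_comm.mp hA
  have key : (inner ℝ (appE A x) (appE A x) : ℝ) = inner ℝ x x := by
    rw [inner_appE, ← appE_mul, h', appE_one]
  have h1 : ‖appE A x‖ ^ 2 = ‖x‖ ^ 2 := by
    rw [← real_inner_self_eq_norm_sq, ← real_inner_self_eq_norm_sq, key]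
  calc ‖appE A x‖ = Real.sqrt (‖appE A x‖ ^ 2) := (Real.sqrt_sq (norm_nonneg _)).symm
    _ = Real.sqrt (‖x‖ ^ 2) := by rw [h1]
    _ = ‖x‖ := Real.sqrt_sq (norm_nonneg _)

lemma appE_diagonal (β : Fin d → ℝ) (x : EuclideanSpace ℝ (Fin d)) (i : Fin d) :
    appE (Matrix.diagonal β) x i = β i * x i := by
  simp [appE, Matrix.toEuclideanLin_apply, Matrix.mulVec_diagonal]

lemma norm_appE_diagonal_le (β : Fin d → ℝ) (hβ : ∀ i, 0 < β i) (hmono : Antitone β)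
    (hd : 0 < d) (x : EuclideanSpace ℝ (Fin d)) :
    ‖appE (Matrix.diagonal β) x‖ ≤ β ⟨0, hd⟩ * ‖x‖ := by
  set i0 : Fin d := ⟨0, hd⟩
  have hβ0 : 0 < β i0 := hβ i0
  have h1 : ‖appE (Matrix.diagonal β) x‖ ^ 2 ≤ (β i0 * ‖x‖) ^ 2 := by
    rw [← real_inner_self_eq_norm_sq, mul_pow, ← real_inner_self_eq_norm_sq]
    rw [PiLp.inner_apply, PiLp.inner_apply]
    simp only [RCLike.inner_apply, starRingEnd_apply, star_trivial]
    rw [Finset.mul_sum]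
    apply Finset.sum_le_sum
    intro i _
    rw [appE_diagonal]
    have hle : β i ≤ β i0 := hmono (by simp [i0, Fin.le_def])
    nlinarith [mul_le_mul hle hle (hβ i).le hβ0.le, sq_nonneg (x i)]
  have h2 : 0 ≤ β i0 * ‖x‖ := by positivity
  nlinarith [norm_nonneg (appE (Matrix.diagonal β) x)]

lemma sin_angle_le {E : Type*} [NormedAddCommGroup E] [InnerProductSpace ℝ E]
    {u v : E} (hu : u ≠ 0) (hv : v ≠ 0) (s : ℝ) :
    Real.sin (InnerProductGeometry.angle u v) ≤ ‖u - s • v‖ / ‖u‖ := by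
  have hnu : (0:ℝ) < ‖u‖ := norm_pos_iff.mpr hu
  have hnv : (0:ℝ) < ‖v‖ := norm_pos_iff.mpr hv
  have h1 := InnerProductGeometry.sin_angle_mul_norm_mul_norm u v
  have key : (inner ℝ u u : ℝ) * inner ℝ v v - inner ℝ u v * inner ℝ u v ≤ (‖u - s • v‖ * ‖v‖) ^ 2 := by
    have e1 : ‖u - s • v‖ ^ 2 = inner ℝ u u - 2 * s * inner ℝ u v + s ^ 2 * (inner ℝ v v : ℝ) := by
      rw [← real_inner_self_eq_norm_sq]
      rw [inner_sub_sub_self]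
      rw [real_inner_smul_left, real_inner_smul_right, real_inner_smul_left,
        real_inner_smul_right, real_inner_comm v u]
      ring
    have e2 : ‖v‖ ^ 2 = (inner ℝ v v : ℝ) := (real_inner_self_eq_norm_sq v).symm
    have : (‖u - s • v‖ * ‖v‖) ^ 2 = ‖u - s • v‖ ^ 2 * ‖v‖ ^ 2 := by ring
    rw [this, e1, e2]
    nlinarith [sq_nonneg (s * (inner ℝ v v : ℝ) - inner ℝ u v)]
  have h2 : Real.sqrt ((inner ℝ u u : ℝ) * inner ℝ v v - inner ℝ u v * inner ℝ u v)
      ≤ ‖u - s • v‖ * ‖v‖ := by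
    calc Real.sqrt ((inner ℝ u u : ℝ) * inner ℝ v v - inner ℝ u v * inner ℝ u v)
        ≤ Real.sqrt ((‖u - s • v‖ * ‖v‖) ^ 2) := Real.sqrt_le_sqrt key
      _ = ‖u - s • v‖ * ‖v‖ := Real.sqrt_sq (by positivity)
  have h3 : Real.sin (InnerProductGeometry.angle u v) * (‖u‖ * ‖v‖)
      ≤ ‖u - s • v‖ * ‖v‖ := by rw [h1]; exact h2
  rw [le_div_iff₀ hnu]
  exact le_of_mul_le_mul_right (by rw [mul_assoc]; exact h3) hnv

end Aux

/-- If `g` is proximal in `P(ℝ^d)` with attracting fixed line `ℝv`, then the lines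
`[k(n)·e₁]` given by singular value decompositions `gⁿ = k(n)·diag(α(n))·k'(n)` converge
to `[v]`: `sin∠(k(n)·e₁, v) → 0`. -/
theorem stmt15 (d : ℕ) (hd : 2 ≤ d) (g : Matrix (Fin d) (Fin d) ℝ)
    (v : EuclideanSpace ℝ (Fin d)) (c : ℝ)
    (W : Submodule ℝ (EuclideanSpace ℝ (Fin d))) (ρ C₀ : ℝ)
    (hv : v ≠ 0) (heig : appE g v = c • v)
    (hWinv : ∀ x ∈ W, appE g x ∈ W)
    (hcompl : IsCompl (Submodule.span ℝ {v}) W)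
    (hρ0 : 0 ≤ ρ) (hρc : ρ < |c|) (hC₀ : 0 < C₀)
    (hdom : ∀ x ∈ W, ∀ n : ℕ, ‖appE (g ^ n) x‖ ≤ C₀ * ρ ^ n * ‖x‖)
    (k : ℕ → Matrix (Fin d) (Fin d) ℝ) (α : ℕ → Fin d → ℝ)
    (k' : ℕ → Matrix (Fin d) (Fin d) ℝ)
    (hsvd : ∀ n : ℕ, 1 ≤ n → IsSVD (g ^ n) (k n) (α n) (k' n)) :
    Filter.Tendsto (fun n : ℕ => sinAngle (appE (k n) (e1 (by omega))) v)
      Filter.atTop (nhds 0) := by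
  have hd0 : 0 < d := by omega
  set i0 : Fin d := ⟨0, hd0⟩
  set E1 : EuclideanSpace ℝ (Fin d) := e1 hd0
  have hE1 : ‖E1‖ = 1 := by
    simp [E1, e1, EuclideanSpace.norm_single]
  have hcpos : 0 < |c| := lt_of_le_of_lt hρ0 hρc
  have hvnorm : 0 < ‖v‖ := norm_pos_iff.mpr hv
  -- projection onto W along span v
  set Q : EuclideanSpace ℝ (Fin d) →ₗ[ℝ] EuclideanSpace ℝ (Fin d) :=
    W.subtype ∘ₗ (W.linearProjOfIsCompl (Submodule.span ℝ {v}) hcompl.symm) with hQ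
  set Qc : EuclideanSpace ℝ (Fin d) →L[ℝ] EuclideanSpace ℝ (Fin d) :=
    LinearMap.toContinuousLinearMap Q with hQc
  set B : ℝ := ‖Qc‖ + 1 with hB
  have hB0 : 0 < B := by positivity
  have hQbound : ∀ x, ‖Q x‖ ≤ B * ‖x‖ := by
    intro x
    have := Qc.le_opNorm x
    have h2 : Qc x = Q x := rfl
    rw [h2] at this
    nlinarith [norm_nonneg x, norm_nonneg (Q x)]
  -- powers of eigenvector
  have hpow : ∀ n : ℕ, appE (g ^ n) v = c ^ n • v := by
    intro n
    induction n with
    | zero => simp [appE_one]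
    | succ m ih =>
      rw [pow_succ, appE_mul, heig, appE_smul, ih, smul_smul, pow_succ]
      ring_nf
  -- the main bound for n ≥ 1
  have main : ∀ n : ℕ, 1 ≤ n →
      sinAngle (appE (k n) E1) v ≤ (C₀ * B) * (ρ / |c|) ^ n := by
    intro n hn
    obtain ⟨hk, hk', hα, hmono, hfact⟩ := hsvd n hn
    set w : EuclideanSpace ℝ (Fin d) := appE (k' n)ᵀ E1 with hw
    have hwnorm : ‖w‖ = 1 := by
      rw [hw, norm_appE_orth (mul_eq_one_comm.mp (by simpa using hk')), hE1]
    -- g^n w = α n i0 • (k n) E1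
    have hgnw : appE (g ^ n) w = α n i0 • appE (k n) E1 := by
      rw [hw, ← appE_mul, hfact]
      have : k n * Matrix.diagonal (α n) * k' n * (k' n)ᵀ = k n * Matrix.diagonal (α n) := by
        rw [Matrix.mul_assoc, hk', Matrix.mul_one]
      rw [this, appE_mul]
      have hDe : appE (Matrix.diagonal (α n)) E1 = α n i0 • E1 := by
        ext i
        rw [appE_diagonal]
        have h1 : (α n i0 • E1) i = α n i0 * E1 i := rfl
        rw [h1]
        have h2 : E1 i = if i = i0 then 1 else 0 := by
          simp [E1, e1, EuclideanSpace.single_apply, i0]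
        rw [h2]
        by_cases hi : i = i0
        · simp [hi]
        · simp [hi]
      rw [hDe, appE_smul]
    have hkE1 : ‖appE (k n) E1‖ = 1 := by
      rw [norm_appE_orth hk, hE1]
    have hkE1ne : appE (k n) E1 ≠ 0 := by
      intro h; rw [h, norm_zero] at hkE1; norm_num at hkE1
    have hα0 : 0 < α n i0 := hα i0
    -- norm of g^n w
    have hgnwnorm : ‖appE (g ^ n) w‖ = α n i0 := by
      rw [hgnw, norm_smul, hkE1, Real.norm_eq_abs, abs_of_pos hα0, mul_one]
    -- α n i0 ≥ |c|^n
    have hα0ge : |c| ^ n ≤ α n i0 := by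
      have h1 : ‖appE (g ^ n) v‖ = |c| ^ n * ‖v‖ := by
        rw [hpow n, norm_smul, Real.norm_eq_abs, abs_pow]
      have h2 : ‖appE (g ^ n) v‖ ≤ α n i0 * ‖v‖ := by
        rw [hfact, appE_mul, appE_mul, norm_appE_orth hk]
        calc ‖appE (Matrix.diagonal (α n)) (appE (k' n) v)‖
            ≤ α n i0 * ‖appE (k' n) v‖ := norm_appE_diagonal_le _ hα hmono hd0 _
          _ = α n i0 * ‖v‖ := by rw [norm_appE_orth hk']
      rw [h1] at h2
      exact le_of_mul_le_mul_right h2 hvnorm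
    -- decompose w
    have hdecomp : (↑(Submodule.linearProjOfIsCompl (Submodule.span ℝ {v}) W hcompl w) :
          EuclideanSpace ℝ (Fin d))
        + ↑(W.linearProjOfIsCompl (Submodule.span ℝ {v}) hcompl.symm w) = w :=
      Submodule.projection_add_projection_eq_self hcompl w
    obtain ⟨t, ht⟩ := Submodule.mem_span_singleton.mp
      (Submodule.linearProjOfIsCompl (Submodule.span ℝ {v}) W hcompl w).2
    set y : EuclideanSpace ℝ (Fin d) := Q w with hyQ
    have hyW : y ∈ W := by
      rw [hyQ, hQ]; exact Submodule.coe_mem _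
    have hwdec : w = t • v + y := by
      rw [hyQ, hQ]
      simp only [LinearMap.comp_apply, Submodule.subtype_apply]
      rw [ht, hdecomp]
    have hynorm : ‖y‖ ≤ B := by
      rw [hyQ]
      calc ‖Q w‖ ≤ B * ‖w‖ := hQbound w
        _ = B := by rw [hwnorm, mul_one]
    -- g^n w - t c^n v = g^n y
    have hsub : appE (g ^ n) w - (t * c ^ n) • v = appE (g ^ n) y := by
      rw [hwdec, appE_add, appE_smul, hpow n, smul_smul]
      abel
    have hgy : ‖appE (g ^ n) y‖ ≤ C₀ * ρ ^ n * B := by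
      calc ‖appE (g ^ n) y‖
          ≤ C₀ * ρ ^ n * ‖y‖ := hdom y hyW n
        _ ≤ C₀ * ρ ^ n * B := by
            apply mul_le_mul_of_nonneg_left hynorm; positivity
    -- angle equality
    have hgnwne : appE (g ^ n) w ≠ 0 := by
      rw [hgnw]
      exact smul_ne_zero (ne_of_gt hα0) hkE1ne
    have hangle : sinAngle (appE (k n) E1) v
        = Real.sin (InnerProductGeometry.angle (appE (g ^ n) w) v) := by
      rw [sinAngle, hgnw, InnerProductGeometry.angle_smul_left_of_pos _ _ hα0]
    rw [hangle]
    calc Real.sin (InnerProductGeometry.angle (appE (g ^ n) w) v)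
        ≤ ‖appE (g ^ n) w - (t * c ^ n) • v‖ / ‖appE (g ^ n) w‖ :=
          sin_angle_le hgnwne hv _
      _ = ‖appE (g ^ n) y‖ / α n i0 := by rw [hsub, hgnwnorm]
      _ ≤ (C₀ * ρ ^ n * B) / |c| ^ n := by
          apply div_le_div₀ (by positivity) hgy (by positivity) hα0ge
      _ = (C₀ * B) * (ρ / |c|) ^ n := by
          rw [div_pow]
          field_simp
  -- conclude with squeeze
  have hlim : Filter.Tendsto (fun n : ℕ => (C₀ * B) * (ρ / |c|) ^ n)
      Filter.atTop (nhds 0) := by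
    rw [show (0:ℝ) = (C₀ * B) * 0 by ring]
    apply Filter.Tendsto.const_mul
    apply tendsto_pow_atTop_nhds_zero_of_lt_one (by positivity)
    rw [div_lt_one hcpos]; exact hρc
  apply squeeze_zero' ?_ ?_ hlim
  · filter_upwards [Filter.eventually_ge_atTop 1] with n hn
    exact Real.sin_nonneg_of_nonneg_of_le_pi (InnerProductGeometry.angle_nonneg _ _)
      (InnerProductGeometry.angle_le_pi _ _)
  · filter_upwards [Filter.eventually_ge_atTop 1] with n hn
    exact main n hn
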